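/- Suppose q* ∈ ℝ^{𝒜×𝒳} is a fixed point of G, i.e., G(q*) = q*, and let Ω = { q : ‖q − q*‖_∞ ≤ r } for some r > 0. Then G maps Ω into Ω and is a contraction on Ω in the ℓ∞-norm (there exists K < 1 with ‖G(q¹) − G(q²)‖_∞ ≤ K ‖q¹ − q²‖_∞ for all q¹, q² ∈ Ω); consequently q* is the unique fixed point of G in Ω and, for any starting point q⁽⁰⁾ with ‖q⁽⁰⁾ − q*‖_∞ < r, the fixed-point iteration q⁽ᵏ⁺¹⁾ = G(q⁽ᵏ⁾) converges to q*. -/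
import Mathlib


open Finset

noncomputable section

/-- A probability mass function on a finite alphabet. -/
def IsPMF {α : Type} [Fintype α] (p : α → ℝ) : Prop :=
  (∀ a, 0 ≤ p a) ∧ ∑ a, p a = 1

variable {X Y A : Type} [Fintype X] [Fintype Y] [Fintype A]
  [DecidableEq X] [DecidableEq Y] [DecidableEq A]

/-- The map `H_{a|x}(q) = log₂( 2^{μ_x} α_{a,x} /
Π_y [ Σ_x̃ P_X(x̃) P_{Y|X,A}(y|x̃,a) 2^{q_{a|x̃}} ]^{P_{Y|X,A}(y|x,a)} )`. -/
def Hfun (PX : X → ℝ) (PW : A → X → Y → ℝ) (μ : X → ℝ) (α : A → X → ℝ)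
    (q : A × X → ℝ) (a : A) (x : X) : ℝ :=
  Real.logb 2 ((2 : ℝ) ^ (μ x) * α a x /
    ∏ y, (∑ xt, PX xt * PW a xt y * (2 : ℝ) ^ (q (a, xt))) ^ (PW a x y))

/-- The claimed partial derivative `∂H_{ã|x̃}/∂q_{a'|x'}`. -/
def Hpd (PX : X → ℝ) (PW : A → X → Y → ℝ) (q : A × X → ℝ)
    (at' : A) (xt' : X) (a' : A) (x' : X) : ℝ :=
  -(if at' = a' then (1 : ℝ) else 0) * ∑ y, PW at' xt' y *
    (PX x' * PW a' x' y * (2 : ℝ) ^ (q (a', x')) /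
      (∑ x, PX x * PW at' x y * (2 : ℝ) ^ (q (at', x))))
/-- The map `G : ℝ^{A×X} → ℝ^{A×X}` with components
`G_{a|x}(q) = β q_{a|x} + (1−β) H_{a|x}(q)`. -/
def Gmap (PX : X → ℝ) (PW : A → X → Y → ℝ) (μ : X → ℝ) (α : A → X → ℝ) (β : ℝ)
    (q : A × X → ℝ) : A × X → ℝ :=
  fun p => β * q p + (1 - β) * Hfun PX PW μ α q p.1 p.2

/-- The claimed partial derivative `∂G_{ã|x̃}/∂q_{a'|x'}`. -/
def Gpd (PX : X → ℝ) (PW : A → X → Y → ℝ) (β : ℝ) (q : A × X → ℝ)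
    (at' : A) (xt' : X) (a' : A) (x' : X) : ℝ :=
  β * (if (at', xt') = (a', x') then (1 : ℝ) else 0) +
    (1 - β) * Hpd PX PW q at' xt' a' x'
section AuxLemmas

lemma aux_two_rpow (x : ℝ) : (2:ℝ) ^ x = Real.exp (Real.log 2 * x) :=
  Real.rpow_def_of_pos (by norm_num) x

lemma aux_convex (E u : ℝ) (hE0 : 0 ≤ E) (hE1 : E ≤ 1) :
    (2:ℝ) ^ (E * u) ≤ 1 + E * ((2:ℝ) ^ u - 1) := by
  have h := convexOn_exp.2 (Set.mem_univ (Real.log 2 * u)) (Set.mem_univ (0:ℝ))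
    hE0 (by linarith : (0:ℝ) ≤ 1 - E) (by ring)
  simp only [smul_eq_mul, mul_zero, add_zero, Real.exp_zero] at h
  rw [aux_two_rpow, aux_two_rpow]
  calc Real.exp (Real.log 2 * (E * u)) = Real.exp (E * (Real.log 2 * u)) := by ring_nf
    _ ≤ E * Real.exp (Real.log 2 * u) + (1 - E) * 1 := h
    _ = 1 + E * (Real.exp (Real.log 2 * u) - 1) := by ring

lemma aux_exp2 (E v V : ℝ) (hE0 : 0 ≤ E) (hE1 : E ≤ 1) (hv : 0 ≤ v) (hvV : v ≤ V) :
    E * (2:ℝ) ^ (-v) + (1 - E) ≤ (2:ℝ) ^ (-(E * (2:ℝ) ^ (-V) * v)) := by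
  have hlog2 : (0:ℝ) < Real.log 2 := Real.log_pos (by norm_num)
  have h1 : 1 - Real.log 2 * (E * (2:ℝ) ^ (-V) * v) ≤ (2:ℝ) ^ (-(E * (2:ℝ) ^ (-V) * v)) := by
    rw [aux_two_rpow (-(E * (2:ℝ) ^ (-V) * v))]
    have := Real.add_one_le_exp (Real.log 2 * (-(E * (2:ℝ) ^ (-V) * v)))
    linarith [this]
  have h2 : Real.log 2 * v * (2:ℝ) ^ (-v) ≤ 1 - (2:ℝ) ^ (-v) := by
    have he := Real.add_one_le_exp (Real.log 2 * v)
    have hp : (0:ℝ) < (2:ℝ) ^ (-v) := Real.rpow_pos_of_pos (by norm_num) _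
    have hmul : ((Real.log 2 * v) + 1) * (2:ℝ) ^ (-v) ≤ Real.exp (Real.log 2 * v) * (2:ℝ) ^ (-v) :=
      mul_le_mul_of_nonneg_right he (le_of_lt hp)
    have hexp : Real.exp (Real.log 2 * v) * (2:ℝ) ^ (-v) = 1 := by
      rw [aux_two_rpow, ← Real.exp_add]; simp
    nlinarith
  have h3 : (2:ℝ) ^ (-V) ≤ (2:ℝ) ^ (-v) :=
    Real.rpow_le_rpow_of_exponent_le (by norm_num) (by linarith)
  have h4 : Real.log 2 * v * (2:ℝ) ^ (-V) ≤ 1 - (2:ℝ) ^ (-v) := by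
    have : Real.log 2 * v * (2:ℝ) ^ (-V) ≤ Real.log 2 * v * (2:ℝ) ^ (-v) :=
      mul_le_mul_of_nonneg_left h3 (by positivity)
    linarith
  nlinarith [mul_le_mul_of_nonneg_left h4 hE0]

lemma aux_log_lower (E w t N R : ℝ) (hE0 : 0 ≤ E) (hEw : E ≤ w) (hw1 : w ≤ 1)
    (ht : -N ≤ t) (htN : t ≤ N)
    (hR : w * (2:ℝ) ^ t + (1 - w) * (2:ℝ) ^ (-N) ≤ R) :
    -N + E * (t + N) ≤ Real.logb 2 R := by
  have hE1 : E ≤ 1 := hEw.trans hw1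
  have hpt : (2:ℝ) ^ (-N) ≤ (2:ℝ) ^ t := Real.rpow_le_rpow_of_exponent_le (by norm_num) ht
  have hpos : (0:ℝ) < (2:ℝ) ^ (-N) := Real.rpow_pos_of_pos (by norm_num) _
  have key : (2:ℝ) ^ (-N + E * (t + N)) ≤ R := by
    have h1 : (2:ℝ) ^ (-N + E * (t + N)) = (2:ℝ) ^ (-N) * (2:ℝ) ^ (E * (t + N)) := by
      rw [← Real.rpow_add (by norm_num)]
    have h2 : (2:ℝ) ^ (E * (t + N)) ≤ 1 + E * ((2:ℝ) ^ (t + N) - 1) := aux_convex E (t+N) hE0 hE1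
    have h3 : (2:ℝ) ^ (-N) * (2:ℝ) ^ (t + N) = (2:ℝ) ^ t := by
      rw [← Real.rpow_add (by norm_num)]; ring_nf
    have h4 : (2:ℝ) ^ (-N) * (1 + E * ((2:ℝ) ^ (t + N) - 1))
        = (2:ℝ) ^ (-N) + E * ((2:ℝ) ^ t - (2:ℝ) ^ (-N)) := by
      rw [mul_add, mul_comm, ← mul_assoc]
      nlinarith [h3]
    have h5 : (2:ℝ) ^ (-N) + E * ((2:ℝ) ^ t - (2:ℝ) ^ (-N))
        ≤ (2:ℝ) ^ (-N) + w * ((2:ℝ) ^ t - (2:ℝ) ^ (-N)) := by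
      nlinarith
    have h6 : (2:ℝ) ^ (-N) + w * ((2:ℝ) ^ t - (2:ℝ) ^ (-N))
        = w * (2:ℝ) ^ t + (1 - w) * (2:ℝ) ^ (-N) := by ring
    nlinarith [mul_le_mul_of_nonneg_left h2 (le_of_lt hpos)]
  calc -N + E * (t + N) = Real.logb 2 ((2:ℝ) ^ (-N + E * (t + N))) :=
        (Real.logb_rpow (by norm_num) (by norm_num)).symm
    _ ≤ Real.logb 2 R := Real.logb_le_logb_of_le (by norm_num)
        (Real.rpow_pos_of_pos (by norm_num) _) key

lemma aux_log_upper (E w t N R : ℝ) (hE0 : 0 ≤ E) (hEw : E ≤ w) (hw1 : w ≤ 1)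
    (ht : -N ≤ t) (htN : t ≤ N) (hRpos : 0 < R)
    (hR : R ≤ w * (2:ℝ) ^ t + (1 - w) * (2:ℝ) ^ N) :
    Real.logb 2 R ≤ N - (E * (2:ℝ) ^ (-(2*N))) * (N - t) := by
  have hE1 : E ≤ 1 := hEw.trans hw1
  have hpt : (2:ℝ) ^ t ≤ (2:ℝ) ^ N := Real.rpow_le_rpow_of_exponent_le (by norm_num) htN
  have hposN : (0:ℝ) < (2:ℝ) ^ N := Real.rpow_pos_of_pos (by norm_num) _
  have key : R ≤ (2:ℝ) ^ (N - (E * (2:ℝ) ^ (-(2*N))) * (N - t)) := by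
    have h1 : R ≤ E * (2:ℝ) ^ t + (1 - E) * (2:ℝ) ^ N := by nlinarith
    have h2 : E * (2:ℝ) ^ (-(N - t)) + (1 - E) ≤ (2:ℝ) ^ (-(E * (2:ℝ) ^ (-(2*N)) * (N - t))) :=
      aux_exp2 E (N - t) (2*N) hE0 hE1 (by linarith) (by linarith)
    have h3 : (2:ℝ) ^ N * (2:ℝ) ^ (-(N - t)) = (2:ℝ) ^ t := by
      rw [← Real.rpow_add (by norm_num)]; ring_nf
    have h4 : (2:ℝ) ^ N * (2:ℝ) ^ (-(E * (2:ℝ) ^ (-(2*N)) * (N - t)))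
        = (2:ℝ) ^ (N - (E * (2:ℝ) ^ (-(2*N))) * (N - t)) := by
      rw [← Real.rpow_add (by norm_num)]; ring_nf
    nlinarith [mul_le_mul_of_nonneg_left h2 (le_of_lt hposN)]
  calc Real.logb 2 R ≤ Real.logb 2 ((2:ℝ) ^ (N - (E * (2:ℝ) ^ (-(2*N))) * (N - t))) :=
        Real.logb_le_logb_of_le (by norm_num) hRpos key
    _ = _ := Real.logb_rpow (by norm_num) (by norm_num)

end AuxLemmas

set_option maxHeartbeats 1000000 in
/-- If `q*` is a fixed point of `G` and `Ω` is any closed `ℓ∞`-ball of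
radius `r > 0` around `q*`, then `G` maps `Ω` into `Ω` and is a contraction on `Ω` in
the `ℓ∞`-norm; consequently `q*` is the unique fixed point of `G` in `Ω`, and the
fixed-point iteration started at any `q⁰` with `‖q⁰ − q*‖_∞ < r` converges to `q*`. -/
theorem Gmap_contraction_and_fixed_point_convergence
    {X Y A : Type} [Fintype X] [Fintype Y] [Fintype A]
    [DecidableEq X] [DecidableEq Y] [DecidableEq A]
    [Nonempty X] [Nonempty Y] [Nonempty A]
    (PX : X → ℝ) (PW : A → X → Y → ℝ) (μ : X → ℝ) (α : A → X → ℝ)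
    (hPX : IsPMF PX) (hPXpos : ∀ x, 0 < PX x)
    (hPW : ∀ a x, IsPMF (PW a x))
    (hα : ∀ a x, 0 < α a x)
    (β : ℝ) (hβ₀ : 0 < β) (hβ₁ : β < 1)
    (qstar : A × X → ℝ) (hfix : Gmap PX PW μ α β qstar = qstar)
    (r : ℝ) (hr : 0 < r) :
    Set.MapsTo (Gmap PX PW μ α β) {q | ‖q - qstar‖ ≤ r} {q | ‖q - qstar‖ ≤ r} ∧
    (∃ K : ℝ, 0 ≤ K ∧ K < 1 ∧
      ∀ q₁ ∈ {q : A × X → ℝ | ‖q - qstar‖ ≤ r},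
        ∀ q₂ ∈ {q : A × X → ℝ | ‖q - qstar‖ ≤ r},
          ‖Gmap PX PW μ α β q₁ - Gmap PX PW μ α β q₂‖ ≤ K * ‖q₁ - q₂‖) ∧
    (∀ q ∈ {q : A × X → ℝ | ‖q - qstar‖ ≤ r}, Gmap PX PW μ α β q = q → q = qstar) ∧
    (∀ q₀ : A × X → ℝ, ‖q₀ - qstar‖ < r →
      Filter.Tendsto (fun k => (Gmap PX PW μ α β)^[k] q₀) Filter.atTop (nhds qstar)) := by
  classical
  -- notation
  set G : (A × X → ℝ) → (A × X → ℝ) := Gmap PX PW μ α β with hG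
  set D : (A × X → ℝ) → A → Y → ℝ :=
    fun q a y => ∑ x, PX x * PW a x y * (2:ℝ) ^ (q (a, x)) with hD
  have hPWnn : ∀ a x y, 0 ≤ PW a x y := fun a x y => (hPW a x).1 y
  have hDpos : ∀ (q : A × X → ℝ) a x y, 0 < PW a x y → 0 < D q a y := by
    intro q a x y h
    have hterm : 0 < PX x * PW a x y * (2:ℝ) ^ (q (a, x)) :=
      mul_pos (mul_pos (hPXpos x) h) (Real.rpow_pos_of_pos (by norm_num) _)
    refine lt_of_lt_of_le hterm ?_
    rw [hD]
    exact Finset.single_le_sum (f := fun x' => PX x' * PW a x' y * (2:ℝ) ^ (q (a, x')))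
      (fun x' _ => by
        have := hPWnn a x' y
        have := (hPXpos x').le
        positivity) (Finset.mem_univ x)
  -- H in sum form
  have hH_eq : ∀ (q : A × X → ℝ) a x, Hfun PX PW μ α q a x
      = Real.logb 2 ((2:ℝ) ^ (μ x) * α a x) - ∑ y, PW a x y * Real.logb 2 (D q a y) := by
    intro q a x
    have hfac : ∀ y : Y, (0:ℝ) < (D q a y) ^ (PW a x y) := by
      intro y
      rcases eq_or_lt_of_le (hPWnn a x y) with h | h
      · rw [← h, Real.rpow_zero]; norm_num
      · exact Real.rpow_pos_of_pos (hDpos q a x y h) _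
    have hnum : (0:ℝ) < (2:ℝ) ^ (μ x) * α a x :=
      mul_pos (Real.rpow_pos_of_pos (by norm_num) _) (hα a x)
    unfold Hfun
    rw [show (∏ y, (∑ xt, PX xt * PW a xt y * (2:ℝ) ^ (q (a, xt))) ^ (PW a x y))
        = ∏ y, (D q a y) ^ (PW a x y) by rw [hD]]
    rw [Real.logb_div hnum.ne' (Finset.prod_pos (fun y _ => hfac y)).ne']
    rw [Real.logb_prod _ _ (fun y _ => (hfac y).ne')]
    congr 1
    refine Finset.sum_congr rfl fun y _ => ?_
    rcases eq_or_lt_of_le (hPWnn a x y) with h | h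
    · rw [← h, Real.rpow_zero, Real.logb_one, zero_mul]
    · rw [Real.logb, Real.logb, Real.log_rpow (hDpos q a x y h)]; ring
  have hHdiff : ∀ (q₁ q₂ : A × X → ℝ) a x,
      Hfun PX PW μ α q₁ a x - Hfun PX PW μ α q₂ a x
      = -∑ y, PW a x y * (Real.logb 2 (D q₁ a y) - Real.logb 2 (D q₂ a y)) := by
    intro q₁ q₂ a x
    rw [hH_eq, hH_eq]
    rw [show ∑ y, PW a x y * (Real.logb 2 (D q₁ a y) - Real.logb 2 (D q₂ a y))
        = ∑ y, (PW a x y * Real.logb 2 (D q₁ a y) - PW a x y * Real.logb 2 (D q₂ a y)) by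
      refine Finset.sum_congr rfl fun y _ => by ring]
    rw [Finset.sum_sub_distrib]
    ring
  -- the uniform weight lower bound ε
  set g : A × X × Y → ℝ := fun p =>
    if 0 < PW p.1 p.2.1 p.2.2 then
      PX p.2.1 * PW p.1 p.2.1 p.2.2 * (2:ℝ) ^ (qstar (p.1, p.2.1) - r) /
        ∑ x, PX x * PW p.1 x p.2.2 * (2:ℝ) ^ (qstar (p.1, x) + r)
    else 1 with hg
  have hgpos : ∀ p, 0 < g p := by
    intro p
    rw [hg]
    dsimp only
    split_ifs with h
    · apply div_pos
      · exact mul_pos (mul_pos (hPXpos _) h) (Real.rpow_pos_of_pos (by norm_num) _)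
      · refine lt_of_lt_of_le
          (mul_pos (mul_pos (hPXpos p.2.1) h) (Real.rpow_pos_of_pos (by norm_num)
            (qstar (p.1, p.2.1) + r)))
          (Finset.single_le_sum
            (f := fun x' => PX x' * PW p.1 x' p.2.2 * (2:ℝ) ^ (qstar (p.1, x') + r))
            (fun x' _ => by
              have := hPWnn p.1 x' p.2.2
              have := (hPXpos x').le
              positivity) (Finset.mem_univ p.2.1))
    · norm_num
  obtain ⟨p₀, -, hp₀⟩ := Finset.exists_min_image Finset.univ g
    ⟨(Classical.arbitrary A, Classical.arbitrary X, Classical.arbitrary Y), Finset.mem_univ _⟩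
  set ε : ℝ := g p₀ with hεdef
  have hεpos : 0 < ε := hgpos p₀
  have hεle : ∀ p, ε ≤ g p := fun p => hp₀ p (Finset.mem_univ p)
  -- the contraction constant
  set E : ℝ := min (ε * (2:ℝ) ^ (-(4*r))) (1/2) with hE
  have hEpos : 0 < E :=
    lt_min (mul_pos hεpos (Real.rpow_pos_of_pos (by norm_num) _)) (by norm_num)
  have hEhalf : E ≤ 1/2 := min_le_right _ _
  have hEε : E ≤ ε := by
    refine (min_le_left _ _).trans ?_
    have : (2:ℝ) ^ (-(4*r)) ≤ 1 :=
      Real.rpow_le_one_of_one_le_of_nonpos (by norm_num) (by linarith)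
    nlinarith
  set K : ℝ := max (1 - 2*(1-β)*E) |1 - 2*β| with hK
  have hKa : 1 - 2*(1-β)*E ≤ K := le_max_left _ _
  have hKb : |1 - 2*β| ≤ K := le_max_right _ _
  have hK0 : 0 ≤ K := (abs_nonneg _).trans hKb
  have hK1 : K < 1 := by
    apply max_lt
    · nlinarith
    · rw [abs_lt]; constructor <;> linarith
  -- membership unfolding
  have hmem : ∀ q : A × X → ℝ, q ∈ {q : A × X → ℝ | ‖q - qstar‖ ≤ r} ↔ ‖q - qstar‖ ≤ r :=
    fun q => Iff.rfl
  have hcomp_ball : ∀ q : A × X → ℝ, ‖q - qstar‖ ≤ r → ∀ p : A × X, |q p - qstar p| ≤ r := by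
    intro q hq p
    have h := norm_le_pi_norm (q - qstar) p
    rw [Pi.sub_apply, Real.norm_eq_abs] at h
    exact h.trans hq
  -- main contraction estimate
  have hcontr : ∀ q₁, ‖q₁ - qstar‖ ≤ r → ∀ q₂, ‖q₂ - qstar‖ ≤ r →
      ‖G q₁ - G q₂‖ ≤ K * ‖q₁ - q₂‖ := by
    intro q₁ hq₁ q₂ hq₂
    set N : ℝ := ‖q₁ - q₂‖ with hNdef
    have hN0 : 0 ≤ N := norm_nonneg _
    have habs : ∀ p : A × X, |q₁ p - q₂ p| ≤ N := by
      intro p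
      have h := norm_le_pi_norm (q₁ - q₂) p
      rwa [Pi.sub_apply, Real.norm_eq_abs] at h
    have hN2r : N ≤ 2*r := by
      have heq : q₁ - q₂ = (q₁ - qstar) - (q₂ - qstar) := by abel
      calc N = ‖(q₁ - qstar) - (q₂ - qstar)‖ := by rw [hNdef, heq]
        _ ≤ ‖q₁ - qstar‖ + ‖q₂ - qstar‖ := norm_sub_le _ _
        _ ≤ 2*r := by linarith
    rw [pi_norm_le_iff_of_nonneg (mul_nonneg hK0 hN0)]
    rintro ⟨a, x⟩
    set t : ℝ := q₁ (a, x) - q₂ (a, x) with ht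
    obtain ⟨htl, htu⟩ := abs_le.mp (habs (a, x))
    -- per y bounds
    have hEc : E ≤ ε * (2:ℝ) ^ (-(2*N)) := by
      have h1 : (2:ℝ) ^ (-(4*r)) ≤ (2:ℝ) ^ (-(2*N)) :=
        Real.rpow_le_rpow_of_exponent_le (by norm_num) (by linarith)
      refine (min_le_left _ _).trans ?_
      exact mul_le_mul_of_nonneg_left h1 hεpos.le
    have hyb : ∀ y : Y,
        PW a x y * (-N + E*(t+N)) ≤
          PW a x y * (Real.logb 2 (D q₁ a y) - Real.logb 2 (D q₂ a y)) ∧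
        PW a x y * (Real.logb 2 (D q₁ a y) - Real.logb 2 (D q₂ a y)) ≤
          PW a x y * (N - E*(N-t)) := by
      intro y
      rcases eq_or_lt_of_le (hPWnn a x y) with h | h
      · rw [← h]; simp
      · have hD1 : 0 < D q₁ a y := hDpos _ _ _ _ h
        have hD2 : 0 < D q₂ a y := hDpos _ _ _ _ h
        set n : ℝ := PX x * PW a x y * (2:ℝ) ^ (q₂ (a, x)) with hn
        have hnpos : 0 < n :=
          mul_pos (mul_pos (hPXpos x) h) (Real.rpow_pos_of_pos (by norm_num) _)
        set w : ℝ := n / D q₂ a y with hw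
        have hnD : n ≤ D q₂ a y := by
          rw [hD, hn]
          exact Finset.single_le_sum (f := fun x' => PX x' * PW a x' y * (2:ℝ) ^ (q₂ (a, x')))
            (fun x' _ => by
              have := hPWnn a x' y
              have := (hPXpos x').le
              positivity) (Finset.mem_univ x)
        have hw1 : w ≤ 1 := (div_le_one hD2).mpr hnD
        have hεw : ε ≤ w := by
          have h1 := hεle (a, x, y)
          rw [hg] at h1
          simp only [if_pos h] at h1
          refine h1.trans ?_
          rw [hw, hn]
          apply div_le_div₀
          · exact hnpos.le
          · apply mul_le_mul_of_nonneg_left _ (mul_nonneg (hPXpos x).le (hPWnn a x y))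
            apply Real.rpow_le_rpow_of_exponent_le (by norm_num)
            have := (abs_le.mp (hcomp_ball q₂ hq₂ (a, x))).1
            linarith
          · exact hD2
          · rw [hD]
            refine Finset.sum_le_sum fun x' _ => ?_
            apply mul_le_mul_of_nonneg_left _ (mul_nonneg (hPXpos x').le (hPWnn a x' y))
            apply Real.rpow_le_rpow_of_exponent_le (by norm_num)
            have := (abs_le.mp (hcomp_ball q₂ hq₂ (a, x'))).2
            linarith
        -- ratio bounds
        have hq1x : (2:ℝ) ^ (q₁ (a, x)) = (2:ℝ) ^ (q₂ (a, x)) * (2:ℝ) ^ t := by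
          rw [← Real.rpow_add (by norm_num)]
          congr 1
          rw [ht]; ring
        have hsplit1 : D q₁ a y
            = PX x * PW a x y * (2:ℝ) ^ (q₁ (a, x))
              + ∑ x' ∈ Finset.univ.erase x, PX x' * PW a x' y * (2:ℝ) ^ (q₁ (a, x')) := by
          rw [hD]; exact (Finset.add_sum_erase _ _ (Finset.mem_univ x)).symm
        have hsplit2 : D q₂ a y
            = n + ∑ x' ∈ Finset.univ.erase x, PX x' * PW a x' y * (2:ℝ) ^ (q₂ (a, x')) := by
          rw [hD, hn]; exact (Finset.add_sum_erase _ _ (Finset.mem_univ x)).symm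
        have hwD : w * D q₂ a y = n := by
          rw [hw]; field_simp
        have hlow : w * (2:ℝ) ^ t + (1-w) * (2:ℝ) ^ (-N) ≤ D q₁ a y / D q₂ a y := by
          rw [le_div_iff₀ hD2]
          have hexpand : (w * (2:ℝ) ^ t + (1-w) * (2:ℝ) ^ (-N)) * D q₂ a y
              = n * (2:ℝ) ^ t + (D q₂ a y - n) * (2:ℝ) ^ (-N) := by
            rw [← hwD]; ring
          rw [hexpand]
          have hrest : ∀ x' ∈ Finset.univ.erase x,
              PX x' * PW a x' y * (2:ℝ) ^ (q₂ (a, x')) * (2:ℝ) ^ (-N)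
                ≤ PX x' * PW a x' y * (2:ℝ) ^ (q₁ (a, x')) := by
            intro x' _
            rw [mul_assoc, ← Real.rpow_add (by norm_num : (0:ℝ) < 2)]
            apply mul_le_mul_of_nonneg_left _ (mul_nonneg (hPXpos x').le (hPWnn a x' y))
            apply Real.rpow_le_rpow_of_exponent_le (by norm_num)
            have := (abs_le.mp (habs (a, x'))).1
            linarith
          have hsum : (∑ x' ∈ Finset.univ.erase x, PX x' * PW a x' y * (2:ℝ) ^ (q₂ (a, x')))
              * (2:ℝ) ^ (-N)
              ≤ ∑ x' ∈ Finset.univ.erase x, PX x' * PW a x' y * (2:ℝ) ^ (q₁ (a, x')) := by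
            rw [Finset.sum_mul]
            exact Finset.sum_le_sum hrest
          have hterm : PX x * PW a x y * (2:ℝ) ^ (q₁ (a, x)) = n * (2:ℝ) ^ t := by
            rw [hq1x, hn]; ring
          rw [hsplit1, hterm]
          have : D q₂ a y - n = ∑ x' ∈ Finset.univ.erase x, PX x' * PW a x' y * (2:ℝ) ^ (q₂ (a, x')) := by
            rw [hsplit2]; ring
          rw [this]
          linarith
        have hup : D q₁ a y / D q₂ a y ≤ w * (2:ℝ) ^ t + (1-w) * (2:ℝ) ^ N := by
          rw [div_le_iff₀ hD2]
          have hexpand : (w * (2:ℝ) ^ t + (1-w) * (2:ℝ) ^ N) * D q₂ a y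
              = n * (2:ℝ) ^ t + (D q₂ a y - n) * (2:ℝ) ^ N := by
            rw [← hwD]; ring
          rw [hexpand]
          have hrest : ∀ x' ∈ Finset.univ.erase x,
              PX x' * PW a x' y * (2:ℝ) ^ (q₁ (a, x'))
                ≤ PX x' * PW a x' y * (2:ℝ) ^ (q₂ (a, x')) * (2:ℝ) ^ N := by
            intro x' _
            calc PX x' * PW a x' y * (2:ℝ) ^ (q₁ (a, x'))
                ≤ PX x' * PW a x' y * (2:ℝ) ^ (q₂ (a, x') + N) := by
                  apply mul_le_mul_of_nonneg_left _ (mul_nonneg (hPXpos x').le (hPWnn a x' y))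
                  apply Real.rpow_le_rpow_of_exponent_le (by norm_num)
                  have := (abs_le.mp (habs (a, x'))).2
                  linarith
              _ = PX x' * PW a x' y * (2:ℝ) ^ (q₂ (a, x')) * (2:ℝ) ^ N := by
                  rw [Real.rpow_add (by norm_num : (0:ℝ) < 2)]; ring
          have hsum : (∑ x' ∈ Finset.univ.erase x, PX x' * PW a x' y * (2:ℝ) ^ (q₁ (a, x')))
              ≤ (∑ x' ∈ Finset.univ.erase x, PX x' * PW a x' y * (2:ℝ) ^ (q₂ (a, x')))
                * (2:ℝ) ^ N := by
            rw [Finset.sum_mul]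
            exact Finset.sum_le_sum hrest
          have hterm : PX x * PW a x y * (2:ℝ) ^ (q₁ (a, x)) = n * (2:ℝ) ^ t := by
            rw [hq1x, hn]; ring
          rw [hsplit1, hterm]
          have : D q₂ a y - n = ∑ x' ∈ Finset.univ.erase x, PX x' * PW a x' y * (2:ℝ) ^ (q₂ (a, x')) := by
            rw [hsplit2]; ring
          rw [this]
          linarith
        have hl := aux_log_lower ε w t N _ hεpos.le hεw hw1 htl htu hlow
        have hu := aux_log_upper ε w t N _ hεpos.le hεw hw1 htl htu (div_pos hD1 hD2) hup
        have hlogd : Real.logb 2 (D q₁ a y) - Real.logb 2 (D q₂ a y)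
            = Real.logb 2 (D q₁ a y / D q₂ a y) :=
          (Real.logb_div hD1.ne' hD2.ne').symm
        constructor
        · apply mul_le_mul_of_nonneg_left _ h.le
          rw [hlogd]
          refine le_trans ?_ hl
          have : E * (t+N) ≤ ε * (t+N) := mul_le_mul_of_nonneg_right hEε (by linarith)
          linarith
        · apply mul_le_mul_of_nonneg_left _ h.le
          rw [hlogd]
          refine hu.trans ?_
          have : E * (N-t) ≤ (ε * (2:ℝ) ^ (-(2*N))) * (N-t) :=
            mul_le_mul_of_nonneg_right hEc (by linarith)
          nlinarith
    -- sum the per-y bounds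
    set θ : ℝ := ∑ y, PW a x y * (Real.logb 2 (D q₁ a y) - Real.logb 2 (D q₂ a y)) with hθ
    have hsum1 : ∑ y, PW a x y * (-N + E*(t+N)) = -N + E*(t+N) := by
      rw [← Finset.sum_mul, (hPW a x).2, one_mul]
    have hsum2 : ∑ y, PW a x y * (N - E*(N-t)) = N - E*(N-t) := by
      rw [← Finset.sum_mul, (hPW a x).2, one_mul]
    have hθlb : -N + E*(t+N) ≤ θ := by
      rw [← hsum1, hθ]
      exact Finset.sum_le_sum fun y _ => (hyb y).1
    have hθub : θ ≤ N - E*(N-t) := by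
      rw [← hsum2, hθ]
      exact Finset.sum_le_sum fun y _ => (hyb y).2
    -- the component difference
    have hcomp : (G q₁ - G q₂) (a, x) = β * t - (1-β) * θ := by
      have h1 : (G q₁ - G q₂) (a, x)
          = β * t + (1-β) * (Hfun PX PW μ α q₁ a x - Hfun PX PW μ α q₂ a x) := by
        simp only [Pi.sub_apply, hG, Gmap, ht]
        ring
      rw [h1, hHdiff q₁ q₂ a x, ← hθ]
      ring
    rw [hcomp, Real.norm_eq_abs, abs_le]
    have hb1 : 1 - 2*β ≤ |1 - 2*β| := le_abs_self _
    have hb2 : -(1 - 2*β) ≤ |1 - 2*β| := neg_le_abs _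
    have hθl' : (1-β) * (-N + E*(t+N)) ≤ (1-β) * θ :=
      mul_le_mul_of_nonneg_left hθlb (by linarith)
    have hθu' : (1-β) * θ ≤ (1-β) * (N - E*(N-t)) :=
      mul_le_mul_of_nonneg_left hθub (by linarith)
    rcases le_or_gt 0 (β - (1-β)*E) with hsgn | hsgn
    · constructor
      · nlinarith [mul_nonneg hsgn (by linarith : (0:ℝ) ≤ t + N),
          mul_le_mul_of_nonneg_right hKa hN0]
      · nlinarith [mul_nonneg hsgn (by linarith : (0:ℝ) ≤ N - t),
          mul_le_mul_of_nonneg_right hKa hN0]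
    · constructor
      · nlinarith [mul_nonneg (by linarith : (0:ℝ) ≤ (1-β)*E - β) (by linarith : (0:ℝ) ≤ N - t),
          mul_le_mul_of_nonneg_right (hb2.trans hKb) hN0]
      · nlinarith [mul_nonneg (by linarith : (0:ℝ) ≤ (1-β)*E - β) (by linarith : (0:ℝ) ≤ t + N),
          mul_le_mul_of_nonneg_right (hb1.trans hKb) hN0]
  -- the fixed point is in the ball
  have hfix' : G qstar = qstar := hfix
  have hqstar_mem : ‖qstar - qstar‖ ≤ r := by simp [hr.le]
  -- maps to
  have hmaps : ∀ q : A × X → ℝ, ‖q - qstar‖ ≤ r → ‖G q - qstar‖ ≤ r := by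
    intro q hq
    calc ‖G q - qstar‖ = ‖G q - G qstar‖ := by rw [hfix']
      _ ≤ K * ‖q - qstar‖ := hcontr q hq qstar hqstar_mem
      _ ≤ K * r := mul_le_mul_of_nonneg_left hq hK0
      _ ≤ 1 * r := mul_le_mul_of_nonneg_right hK1.le hr.le
      _ = r := one_mul r
  refine ⟨fun q hq => hmaps q hq, ⟨K, hK0, hK1, fun q₁ hq₁ q₂ hq₂ => hcontr q₁ hq₁ q₂ hq₂⟩,
    ?_, ?_⟩
  · -- uniqueness
    intro q hq hGq
    have h1 : ‖q - qstar‖ ≤ K * ‖q - qstar‖ := by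
      calc ‖q - qstar‖ = ‖G q - G qstar‖ := by rw [hGq, hfix']
        _ ≤ K * ‖q - qstar‖ := hcontr q hq qstar hqstar_mem
    have h2 : ‖q - qstar‖ = 0 := by nlinarith [norm_nonneg (q - qstar)]
    have h3 : q - qstar = 0 := norm_eq_zero.mp h2
    funext p
    have := congrFun h3 p
    rw [Pi.sub_apply, Pi.zero_apply, sub_eq_zero] at this
    exact this
  · -- convergence
    intro q₀ hq₀
    have hiter : ∀ k, ‖G^[k] q₀ - qstar‖ ≤ K^k * ‖q₀ - qstar‖ := by
      intro k
      induction k with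
      | zero => simp
      | succ k ih =>
        have hmemk : ‖G^[k] q₀ - qstar‖ ≤ r := by
          have hKk : K^k ≤ 1 := pow_le_one₀ hK0 hK1.le
          calc ‖G^[k] q₀ - qstar‖ ≤ K^k * ‖q₀ - qstar‖ := ih
            _ ≤ 1 * ‖q₀ - qstar‖ := mul_le_mul_of_nonneg_right hKk (norm_nonneg _)
            _ = ‖q₀ - qstar‖ := one_mul _
            _ ≤ r := hq₀.le
        calc ‖G^[k+1] q₀ - qstar‖ = ‖G (G^[k] q₀) - G qstar‖ := by
              rw [Function.iterate_succ_apply', hfix']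
          _ ≤ K * ‖G^[k] q₀ - qstar‖ := hcontr _ hmemk qstar hqstar_mem
          _ ≤ K * (K^k * ‖q₀ - qstar‖) := mul_le_mul_of_nonneg_left ih hK0
          _ = K^(k+1) * ‖q₀ - qstar‖ := by ring
    rw [tendsto_iff_norm_sub_tendsto_zero]
    have hlim : Filter.Tendsto (fun k => K^k * ‖q₀ - qstar‖) Filter.atTop (nhds 0) := by
      have := (tendsto_pow_atTop_nhds_zero_of_lt_one hK0 hK1).mul_const ‖q₀ - qstar‖
      simpa using this
    exact squeeze_zero (fun k => norm_nonneg _) hiter hlim
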